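/- Let f : ℂ → ℂ be an entire function, let p ∈ ℂ satisfy f(p) = p, and set λ = f′(p); assume 0 < |λ| < 1. Let A = {z ∈ ℂ : f^[n](z) → p as n → ∞} be the basin of attraction of p. Then there exists a function Φ : ℂ → ℂ that is complex-differentiable at every point of A, satisfies Φ(p) = 0 and Φ′(p) = 1, and satisfies the linearization equation Φ(f(z)) = λ·Φ(z) for every z ∈ A. -/

import Mathlib

open Filter Topology Metric

/-- Koenigs linearization on the whole basin of attraction of an attracting
fixed point with nonzero multiplier, for an entire map. -/
theorem stmt2 (f : ℂ → ℂ) (hf : Differentiable ℂ f)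
    (p : ℂ) (hp : f p = p)
    (hl0 : 0 < ‖deriv f p‖) (hl1 : ‖deriv f p‖ < 1)
    (A : Set ℂ) (hA : A = {z : ℂ | Tendsto (fun n => f^[n] z) atTop (𝓝 p)}) :
    ∃ Φ : ℂ → ℂ, (∀ z ∈ A, DifferentiableAt ℂ Φ z) ∧ Φ p = 0 ∧ deriv Φ p = 1 ∧
      ∀ z ∈ A, Φ (f z) = deriv f p * Φ z := by
  classical
  subst hA
  obtain ⟨l, hldef⟩ : ∃ l : ℂ, deriv f p = l := ⟨_, rfl⟩
  rw [hldef] at hl0 hl1 ⊢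
  have hlne : l ≠ 0 := by
    intro h
    rw [h] at hl0
    simp at hl0
  obtain ⟨a, hadef⟩ : ∃ a : ℝ, a = ‖l‖ := ⟨_, rfl⟩
  have ha0 : 0 < a := hadef ▸ hl0
  have ha1 : a < 1 := hadef ▸ hl1
  have hanorm : ‖l‖ = a := by rw [hadef]
  -- second divided difference
  obtain ⟨g, hgdef⟩ : ∃ g : ℂ → ℂ, g = dslope (dslope f p) p := ⟨_, rfl⟩
  have hd1 : Differentiable ℂ (dslope f p) := by
    rw [← differentiableOn_univ]
    exact (Complex.differentiableOn_dslope Filter.univ_mem).mpr hf.differentiableOn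
  have hdg : Differentiable ℂ g := by
    rw [hgdef, ← differentiableOn_univ]
    exact (Complex.differentiableOn_dslope Filter.univ_mem).mpr hd1.differentiableOn
  have key : ∀ z, f z - p = (z - p) * (l + (z - p) * g z) := by
    intro z
    have h1 : (z - p) • dslope f p z = f z - f p := sub_smul_dslope f p z
    have h2 : (z - p) • dslope (dslope f p) p z = dslope f p z - dslope f p p :=
      sub_smul_dslope (dslope f p) p z
    rw [smul_eq_mul] at h1 h2
    rw [dslope_same, hldef] at h2
    rw [← hgdef] at h2
    rw [hp] at h1
    rw [← h1]
    linear_combination (p - z) * h2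
  have key2 : ∀ z, f z - p - l * (z - p) = (z - p) ^ 2 * g z := by
    intro z
    linear_combination key z
  -- bound for g on the unit ball
  obtain ⟨C0, hC0⟩ := (isCompact_closedBall p 1).exists_bound_of_continuousOn
    hdg.continuous.continuousOn
  obtain ⟨C, hCnn, hgC⟩ : ∃ C : ℝ, 0 ≤ C ∧ ∀ z ∈ closedBall p 1, ‖g z‖ ≤ C :=
    ⟨max C0 0, le_max_right _ _, fun z hz => (hC0 z hz).trans (le_max_left _ _)⟩
  -- choice of constants
  obtain ⟨b, hab, hb1, hb0, hb2⟩ : ∃ b : ℝ, a < b ∧ b < 1 ∧ 0 < b ∧ b ^ 2 < a := by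
    have hsq : Real.sqrt a ^ 2 = a := Real.sq_sqrt ha0.le
    have hspos : 0 < Real.sqrt a := Real.sqrt_pos.mpr ha0
    have hslt1 : Real.sqrt a < 1 := by nlinarith
    have haltsqrt : a < Real.sqrt a := by nlinarith
    refine ⟨(a + Real.sqrt a) / 2, by linarith, by linarith, by linarith, ?_⟩
    nlinarith
  obtain ⟨r, hr0, hr1, hrC⟩ : ∃ r : ℝ, 0 < r ∧ r ≤ 1 ∧ r * C ≤ b - a := by
    refine ⟨min 1 ((b - a) / (C + 1)), lt_min one_pos (div_pos (by linarith) (by linarith)),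
      min_le_left _ _, ?_⟩
    have h1 : min 1 ((b - a) / (C + 1)) ≤ (b - a) / (C + 1) := min_le_right _ _
    rw [le_div_iff₀ (by linarith : (0:ℝ) < C + 1)] at h1
    have h2 : (0:ℝ) < min 1 ((b - a) / (C + 1)) :=
      lt_min one_pos (div_pos (by linarith) (by linarith))
    nlinarith
  -- basic estimates
  have E1 : ∀ z ∈ ball p r, ‖f z - p‖ ≤ b * ‖z - p‖ := by
    intro z hz
    rw [mem_ball_iff_norm] at hz
    have hzc : z ∈ closedBall p 1 := by
      rw [mem_closedBall_iff_norm]; linarith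
    have hgz := hgC z hzc
    calc ‖f z - p‖ = ‖z - p‖ * ‖l + (z - p) * g z‖ := by rw [key z, norm_mul]
      _ ≤ ‖z - p‖ * (a + r * C) := by
          refine mul_le_mul_of_nonneg_left ?_ (norm_nonneg _)
          refine (norm_add_le _ _).trans ?_
          rw [norm_mul]
          have : ‖z - p‖ * ‖g z‖ ≤ r * C :=
            mul_le_mul hz.le hgz (norm_nonneg _) hr0.le
          linarith [hanorm]
      _ ≤ b * ‖z - p‖ := by nlinarith [norm_nonneg (z - p)]
  have E2 : ∀ z ∈ ball p r, f z ∈ ball p r := by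
    intro z hz
    have h1 := E1 z hz
    rw [mem_ball_iff_norm] at hz ⊢
    nlinarith
  have E3 : ∀ z ∈ ball p r, ∀ n : ℕ, f^[n] z ∈ ball p r ∧ ‖f^[n] z - p‖ ≤ b ^ n * ‖z - p‖ := by
    intro z hz n
    induction n with
    | zero => simpa using hz
    | succ n ih =>
      obtain ⟨ih1, ih2⟩ := ih
      constructor
      · rw [Function.iterate_succ_apply']
        exact E2 _ ih1
      · rw [Function.iterate_succ_apply']
        calc ‖f (f^[n] z) - p‖ ≤ b * ‖f^[n] z - p‖ := E1 _ ih1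
          _ ≤ b * (b ^ n * ‖z - p‖) := by nlinarith
          _ = b ^ (n + 1) * ‖z - p‖ := by ring
  -- the approximating maps
  obtain ⟨φ, hφdef⟩ : ∃ φ : ℕ → ℂ → ℂ, φ = fun n z => (f^[n] z - p) / l ^ n := ⟨_, rfl⟩
  have hφ0 : ∀ z, φ 0 z = z - p := by intro z; simp [hφdef]
  have hdform : ∀ n z, φ (n + 1) z - φ n z = (f^[n] z - p) ^ 2 * g (f^[n] z) / l ^ (n + 1) := by
    intro n z
    have hk := key2 (f^[n] z)
    simp only [hφdef, Function.iterate_succ_apply']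
    have hpn : (l : ℂ) ^ n ≠ 0 := pow_ne_zero _ hlne
    have hpn1 : (l : ℂ) ^ (n + 1) ≠ 0 := pow_ne_zero _ hlne
    rw [div_sub_div _ _ hpn1 hpn, div_eq_div_iff (mul_ne_zero hpn1 hpn) hpn1]
    linear_combination (l ^ (n + 1) * l ^ n) * hk
  obtain ⟨u, hudef⟩ : ∃ u : ℕ → ℝ, u = fun n => (C * r ^ 2 / a) * (b ^ 2 / a) ^ n := ⟨_, rfl⟩
  have hbound : ∀ (n : ℕ), ∀ w ∈ ball p r, ‖φ (n + 1) w - φ n w‖ ≤ u n := by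
    intro n w hw
    obtain ⟨hmem, hnorm⟩ := E3 w hw n
    have hwr : ‖w - p‖ ≤ r := by
      rw [mem_ball_iff_norm] at hw; linarith
    have hiter : ‖f^[n] w - p‖ ≤ b ^ n * r := by
      calc ‖f^[n] w - p‖ ≤ b ^ n * ‖w - p‖ := hnorm
        _ ≤ b ^ n * r := by
            have := pow_nonneg hb0.le n
            nlinarith
    have hmemc : f^[n] w ∈ closedBall p 1 := by
      rw [mem_closedBall_iff_norm]
      rw [mem_ball_iff_norm] at hmem
      linarith
    have hgb := hgC _ hmemc
    rw [hdform n w, norm_div, norm_mul, norm_pow, norm_pow, hanorm]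
    have h1 : ‖f^[n] w - p‖ ^ 2 * ‖g (f^[n] w)‖ ≤ (b ^ n * r) ^ 2 * C := by
      have h2 : ‖f^[n] w - p‖ ^ 2 ≤ (b ^ n * r) ^ 2 := by
        have := norm_nonneg (f^[n] w - p)
        nlinarith
      nlinarith [norm_nonneg (f^[n] w - p), sq_nonneg (b ^ n * r)]
    have hapow : (0:ℝ) < a ^ (n + 1) := pow_pos ha0 _
    rw [div_le_iff₀ hapow]
    have hueq : u n * a ^ (n + 1) = (b ^ n * r) ^ 2 * C := by
      simp only [hudef]
      rw [div_pow, pow_succ]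
      field_simp
      ring
    rw [hueq]
    exact h1
  have hq0 : (0:ℝ) ≤ b ^ 2 / a := div_nonneg (sq_nonneg b) ha0.le
  have hq1 : b ^ 2 / a < 1 := (div_lt_one ha0).mpr hb2
  have hu : Summable u := by
    rw [hudef]
    exact (summable_geometric_of_lt_one hq0 hq1).mul_left _
  have hdd : ∀ n : ℕ, Differentiable ℂ (fun z => φ (n + 1) z - φ n z) := by
    intro n
    have hφd : ∀ m : ℕ, Differentiable ℂ (fun z => φ m z) := by
      intro m
      simp only [hφdef]
      exact ((hf.iterate m).sub_const p).div_const _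
    exact (hφd (n + 1)).sub (hφd n)
  obtain ⟨T, hTdef⟩ : ∃ T : ℂ → ℂ, T = fun z => ∑' n : ℕ, (φ (n + 1) z - φ n z) := ⟨_, rfl⟩
  obtain ⟨Ψ, hΨdef⟩ : ∃ Ψ : ℂ → ℂ, Ψ = fun z => (z - p) + T z := ⟨_, rfl⟩
  have hUopen : IsOpen (ball p r) := isOpen_ball
  have hTdiff : DifferentiableOn ℂ T (ball p r) := by
    rw [hTdef]
    exact Complex.differentiableOn_tsum_of_summable_norm hu (fun n => (hdd n).differentiableOn)
      hUopen hbound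
  have hΨdiff : DifferentiableOn ℂ Ψ (ball p r) := by
    rw [hΨdef]
    exact (differentiableOn_id.sub_const p).add hTdiff
  have hppU : p ∈ ball p r := mem_ball_self hr0
  -- pointwise convergence
  have L1 : ∀ z ∈ ball p r, Tendsto (fun n => φ n z) atTop (𝓝 (Ψ z)) := by
    intro z hz
    have hsz : Summable (fun n => φ (n + 1) z - φ n z) :=
      Summable.of_norm_bounded hu (fun n => hbound n z hz)
    have ht := hsz.hasSum.tendsto_sum_nat
    have hkey : (fun n => φ n z) =
        fun n => (∑ i ∈ Finset.range n, (φ (i + 1) z - φ i z)) + (z - p) := by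
      funext n
      rw [Finset.sum_range_sub (fun i => φ i z), hφ0]
      ring
    rw [hkey]
    have h2 := ht.add (tendsto_const_nhds (x := z - p))
    have h3 : Ψ z = T z + (z - p) := by rw [hΨdef]; ring
    rw [h3]
    simp only [hTdef]
    exact h2
  -- value and derivative at p
  have hfixn : ∀ n : ℕ, f^[n] p = p := fun n => Function.iterate_fixed hp n
  have L3 : Ψ p = 0 := by
    simp [hΨdef, hTdef, hφdef, hp, hfixn]
  have hiterderiv : ∀ n : ℕ, HasDerivAt (f^[n]) (l ^ n) p := by
    intro n
    induction n with
    | zero => simpa using hasDerivAt_id p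
    | succ n ih =>
      have hfp : HasDerivAt f l p := hldef ▸ (hf p).hasDerivAt
      have hcomp : HasDerivAt (f ∘ f^[n]) (l * l ^ n) p := by
        have hfp' : HasDerivAt f l (f^[n] p) := by rw [hfixn n]; exact hfp
        exact hfp'.comp p ih
      rw [← Function.iterate_succ'] at hcomp
      convert hcomp using 1
      ring
  have hφderiv : ∀ n : ℕ, HasDerivAt (fun z => φ n z) 1 p := by
    intro n
    have h1 : HasDerivAt (fun z => (f^[n] z - p) / l ^ n) (l ^ n / l ^ n) p :=
      ((hiterderiv n).sub_const p).div_const _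
    rw [div_self (pow_ne_zero n hlne)] at h1
    simpa [hφdef] using h1
  have hdderiv : ∀ n : ℕ, HasDerivAt (fun z => φ (n + 1) z - φ n z) 0 p := by
    intro n
    have h := (hφderiv (n + 1)).sub (hφderiv n)
    rw [sub_self] at h
    exact h
  have hTderivp : deriv T p = 0 := by
    have hs := Complex.hasSum_deriv_of_summable_norm hu (fun n => (hdd n).differentiableOn) hUopen
      hbound hppU
    have hz : ∀ n : ℕ, deriv (fun z => φ (n + 1) z - φ n z) p = 0 := fun n => (hdderiv n).deriv
    simp only [hz] at hs
    have := hs.unique hasSum_zero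
    rw [hTdef]
    exact this
  have L4 : deriv Ψ p = 1 := by
    have hTat : DifferentiableAt ℂ T p := hTdiff.differentiableAt (hUopen.mem_nhds hppU)
    have h1 : HasDerivAt (fun z => (z - p) + T z) (1 + deriv T p) p :=
      ((hasDerivAt_id p).sub_const p).add hTat.hasDerivAt
    rw [hTderivp, add_zero] at h1
    rw [hΨdef]
    exact h1.deriv
  -- functional equation on the ball
  have L5 : ∀ z ∈ ball p r, Ψ (f z) = l * Ψ z := by
    intro z hz
    have h1 := L1 (f z) (E2 z hz)
    have h2 := (L1 z hz).comp (tendsto_add_atTop_nat 1)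
    have h3 : (fun n => φ n (f z)) = fun n => l * φ (n + 1) z := by
      funext n
      simp only [hφdef, ← Function.iterate_succ_apply]
      rw [pow_succ]
      field_simp
    rw [h3] at h1
    have h4 : Tendsto (fun n => l * φ (n + 1) z) atTop (𝓝 (l * Ψ z)) := h2.const_mul l
    exact tendsto_nhds_unique h1 h4
  -- well-definedness monotonicity
  have W0 : ∀ z (n : ℕ), f^[n] z ∈ ball p r →
      l ^ (-(n : ℤ)) * Ψ (f^[n] z) = l ^ (-((n + 1 : ℕ) : ℤ)) * Ψ (f^[n + 1] z) := by
    intro z n hn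
    rw [Function.iterate_succ_apply', L5 _ hn, ← mul_assoc]
    congr 1
    rw [show (-((n + 1 : ℕ) : ℤ)) = (-(n : ℤ)) + (-1) by push_cast; ring,
      zpow_add₀ hlne, zpow_neg_one, mul_assoc, inv_mul_cancel₀ hlne, mul_one]
  have Wmono : ∀ z (m n : ℕ), m ≤ n → f^[m] z ∈ ball p r →
      (l ^ (-(m : ℤ)) * Ψ (f^[m] z) = l ^ (-(n : ℤ)) * Ψ (f^[n] z) ∧ f^[n] z ∈ ball p r) := by
    intro z m n hmn hm
    induction n with
    | zero =>
      have : m = 0 := Nat.le_zero.mp hmn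
      subst this
      exact ⟨rfl, hm⟩
    | succ n ih =>
      rcases Nat.lt_or_ge m (n + 1) with h | h
      · obtain ⟨he, hn⟩ := ih (Nat.lt_succ_iff.mp h)
        refine ⟨he.trans (W0 z n hn), ?_⟩
        rw [Function.iterate_succ_apply']
        exact E2 _ hn
      · have : m = n + 1 := le_antisymm hmn h
        subst this
        exact ⟨rfl, hm⟩
  -- global definition
  obtain ⟨Φ, hΦ⟩ : ∃ Φ : ℂ → ℂ, ∀ z, Φ z =
      if h : ∃ n : ℕ, f^[n] z ∈ ball p r then
        l ^ (-(Nat.find h : ℤ)) * Ψ (f^[Nat.find h] z) else 0 :=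
    ⟨_, fun z => rfl⟩
  have W : ∀ z (n : ℕ), f^[n] z ∈ ball p r → Φ z = l ^ (-(n : ℤ)) * Ψ (f^[n] z) := by
    intro z n hn
    have hex : ∃ m : ℕ, f^[m] z ∈ ball p r := ⟨n, hn⟩
    rw [hΦ z, dif_pos hex]
    exact (Wmono z (Nat.find hex) n (Nat.find_min' hex hn) (Nat.find_spec hex)).1
  have hexA : ∀ z, Tendsto (fun n => f^[n] z) atTop (𝓝 p) → ∃ n : ℕ, f^[n] z ∈ ball p r := by
    intro z hz
    have hev : ∀ᶠ n in atTop, f^[n] z ∈ ball p r := hz (hUopen.mem_nhds hppU)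
    exact hev.exists
  refine ⟨Φ, ?_, ?_, ?_, ?_⟩
  · -- differentiability on the basin
    intro z hz
    obtain ⟨n, hn⟩ := hexA z hz
    have hopen : IsOpen (f^[n] ⁻¹' ball p r) := hUopen.preimage (hf.iterate n).continuous
    have heq : Φ =ᶠ[𝓝 z] fun w => l ^ (-(n : ℤ)) * Ψ (f^[n] w) :=
      Filter.eventuallyEq_of_mem (hopen.mem_nhds hn) (fun w hw => W w n hw)
    have hΨat : DifferentiableAt ℂ Ψ (f^[n] z) := hΨdiff.differentiableAt (hUopen.mem_nhds hn)
    have hdnt : DifferentiableAt ℂ (fun w => l ^ (-(n : ℤ)) * Ψ (f^[n] w)) z :=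
      (hΨat.comp z ((hf.iterate n) z)).const_mul _
    exact hdnt.congr_of_eventuallyEq heq
  · -- value at p
    have h0 : f^[0] p ∈ ball p r := by simpa using hppU
    rw [W p 0 h0]
    simp [L3]
  · -- derivative at p
    have heq : Φ =ᶠ[𝓝 p] Ψ := by
      refine Filter.eventuallyEq_of_mem (hUopen.mem_nhds hppU) (fun w hw => ?_)
      have := W w 0 (by simpa using hw)
      simpa using this
    rw [heq.deriv_eq]
    exact L4
  · -- functional equation on the basin
    intro z hz
    obtain ⟨n, hn⟩ := hexA z hz
    have hn1 : f^[n + 1] z ∈ ball p r := by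
      rw [Function.iterate_succ_apply']
      exact E2 _ hn
    have ha1 : Φ (f z) = l ^ (-(n : ℤ)) * Ψ (f^[n] (f z)) := by
      refine W (f z) n ?_
      rw [← Function.iterate_succ_apply]
      exact hn1
    have ha2 : Φ z = l ^ (-((n + 1 : ℕ) : ℤ)) * Ψ (f^[n + 1] z) := W z (n + 1) hn1
    rw [ha1, ha2, ← Function.iterate_succ_apply, ← mul_assoc]
    congr 1
    rw [show (-(n : ℤ)) = 1 + (-((n + 1 : ℕ) : ℤ)) by push_cast; ring,
      zpow_add₀ hlne, zpow_one]
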